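/- In the construction where U = J (the completely join-irreducibles of a Nelson algebra A on an algebraic lattice) and x R y iff ρ(x) ≤ ρ(y), the quasiorder R is a partial order if and only if R is the identity relation on J, if and only if A is a Boolean algebra. -/

import Mathlib

def CompletelyJoinIrreducible {A : Type*} [CompleteLattice A] (j : A) : Prop :=
  ∀ S : Set A, j = sSup S → j ∈ S

def star {A : Type*} [CompleteLattice A] (c : A → A) (j : A) : A :=
  sInf {x : A | ¬ x ≤ c j}

-- `ρ(j) = j` if `j ≤ j*` (i.e. `j ∈ J⁻ ∪ J*`), and `ρ(j) = j*` otherwise.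
open Classical in
noncomputable def rho {A : Type*} [CompleteLattice A] (c : A → A) (j : A) : A :=
  if j ≤ star c j then j else star c j

namespace NAux

variable {A : Type*} [CompleteLattice A]

section DeMorgan

variable (c : A → A) (hinv : ∀ x, c (c x) = x)
  (hanti : ∀ x y : A, x ≤ y ↔ c y ≤ c x)

include hinv hanti

lemma le_c_iff (x y : A) : x ≤ c y ↔ y ≤ c x := by
  constructor
  · intro h
    have := (hanti x (c y)).1 h
    rwa [hinv] at this
  · intro h
    have := (hanti y (c x)).1 h
    rwa [hinv] at this

lemma cmono {x y : A} (h : x ≤ y) : c y ≤ c x := (hanti x y).1 h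

lemma cbot : c (⊥ : A) = ⊤ :=
  top_le_iff.mp ((hanti ⊤ (c ⊥)).mpr (by rw [hinv]; exact bot_le))

lemma ctop : c (⊤ : A) = ⊥ :=
  le_bot_iff.mp ((hanti (c ⊤) ⊥).mpr (by rw [hinv]; exact le_top))

lemma csSup (S : Set A) : c (sSup S) = sInf (c '' S) := by
  apply le_antisymm
  · exact le_sInf (by rintro _ ⟨s, hs, rfl⟩; exact cmono c hinv hanti (le_sSup hs))
  · rw [← hinv (sInf (c '' S)), ← hanti]
    exact sSup_le fun s hs => (le_c_iff c hinv hanti s _).mpr (sInf_le ⟨s, hs, rfl⟩)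

lemma csInf (S : Set A) : c (sInf S) = sSup (c '' S) := by
  apply le_antisymm
  · rw [← hinv (sSup (c '' S)), ← hanti]
    refine le_sInf fun s hs => ?_
    rw [← hinv s, ← hanti]
    exact le_sSup ⟨s, hs, rfl⟩
  · exact sSup_le (by rintro _ ⟨s, hs, rfl⟩; exact cmono c hinv hanti (sInf_le hs))

lemma csup2 (x y : A) : c (x ⊔ y) = c x ⊓ c y := by
  apply le_antisymm
  · exact le_inf (cmono c hinv hanti le_sup_left) (cmono c hinv hanti le_sup_right)
  · rw [← hinv (c x ⊓ c y), ← hanti]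
    exact sup_le ((le_c_iff c hinv hanti x _).mpr inf_le_left)
      ((le_c_iff c hinv hanti y _).mpr inf_le_right)

lemma cinf2 (x y : A) : c (x ⊓ y) = c x ⊔ c y := by
  rw [← hinv (c x ⊔ c y), csup2 c hinv hanti, hinv, hinv]

end DeMorgan

lemma cji_ne_bot {j : A} (hj : CompletelyJoinIrreducible j) : j ≠ ⊥ := by
  intro h
  exact absurd (hj ∅ (by rw [h, sSup_empty])) (Set.notMem_empty j)

variable [IsCompactlyGenerated A]

/-- Completely join-irreducible elements are completely join-prime
(uses distributivity and compact generation). -/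
lemma joinPrime (hdist : ∀ x y z : A, x ⊓ (y ⊔ z) = (x ⊓ y) ⊔ (x ⊓ z))
    {j : A} (hj : CompletelyJoinIrreducible j) {S : Set A} (h : j ≤ sSup S) :
    ∃ s ∈ S, j ≤ s := by
  classical
  set T := (fun s => j ⊓ s) '' S with hT
  have hTle : sSup T ≤ j := sSup_le (by rintro _ ⟨s, hs, rfl⟩; exact inf_le_left)
  have key : ∀ t : Finset A, ↑t ⊆ S → j ⊓ t.sup id ≤ sSup T := by
    intro t
    induction t using Finset.induction_on with
    | empty => intro _; simp
    | insert _ _ ha ih =>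
      intro hsub
      rw [Finset.sup_insert, hdist]
      apply sup_le
      · exact le_sSup ⟨_, hsub (Finset.mem_insert_self _ _), rfl⟩
      · exact ih fun x hx => hsub (Finset.mem_insert_of_mem hx)
  have hle : j ≤ sSup T := by
    obtain ⟨K, hK, hKsup⟩ := IsCompactlyGenerated.exists_sSup_eq j
    conv_lhs => rw [← hKsup]
    apply sSup_le; intro k hk
    have hkj : k ≤ j := hKsup ▸ le_sSup hk
    obtain ⟨t, htS, hkt⟩ := (CompleteLattice.isCompactElement_iff_exists_le_sSup_of_le_sSup A k).mp (hK k hk) S (hkj.trans h)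
    exact (le_inf hkj hkt).trans (key t htS)
  obtain ⟨s, hsS, hEq⟩ := hj T (le_antisymm hle hTle)
  exact ⟨s, hsS, by rw [← hEq]; exact inf_le_right⟩

/-- A binary consequence of join-primeness. -/
lemma joinPrime2 (hdist : ∀ x y z : A, x ⊓ (y ⊔ z) = (x ⊓ y) ⊔ (x ⊓ z))
    {j x y : A} (hj : CompletelyJoinIrreducible j) (h : j ≤ x ⊔ y) :
    j ≤ x ∨ j ≤ y := by
  obtain ⟨s, hs, hjs⟩ := joinPrime hdist hj (S := {x, y}) (by rwa [sSup_pair])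
  simp only [Set.mem_insert_iff, Set.mem_singleton_iff] at hs
  rcases hs with rfl | rfl
  · exact Or.inl hjs
  · exact Or.inr hjs

/-- Existence of completely meet-irreducible elements separating `a` from `b`. -/
lemma exists_cmi {a b : A} (hab : ¬ a ≤ b) :
    ∃ m : A, (∀ S : Set A, m = sInf S → m ∈ S) ∧ b ≤ m ∧ ¬ a ≤ m := by
  obtain ⟨K, hK, hKsup⟩ := IsCompactlyGenerated.exists_sSup_eq a
  have hexk : ∃ k ∈ K, ¬ k ≤ b := by
    by_contra h; push_neg at h; exact hab (hKsup ▸ sSup_le h)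
  obtain ⟨k, hkK, hkb⟩ := hexk
  have hka : k ≤ a := hKsup ▸ le_sSup hkK
  have hkc : IsCompactElement k := hK k hkK
  obtain ⟨m, hbm, hmax⟩ :=
    zorn_le_nonempty₀ {x : A | b ≤ x ∧ ¬ k ≤ x}
      (by
        intro cc hccs hchain y hy
        refine ⟨sSup cc, ⟨(hccs hy).1.trans (le_sSup hy), ?_⟩, fun z hz => le_sSup hz⟩
        intro hksup
        obtain ⟨x, hxcc, hkx⟩ :=
          (CompleteLattice.isCompactElement_iff_le_of_directed_sSup_le A k).mp hkc cc
            ⟨y, hy⟩ hchain.directedOn hksup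
        exact (hccs hxcc).2 hkx)
      b ⟨le_rfl, hkb⟩
  refine ⟨m, ?_, hmax.1.1, fun ham => hmax.1.2 (hka.trans ham)⟩
  intro S hS
  by_contra hmS
  have hkS : k ≤ sInf S := by
    apply le_sInf
    intro x hx
    have hmx : m ≤ x := hS ▸ sInf_le hx
    by_contra hkx
    have hxs : x ∈ {x : A | b ≤ x ∧ ¬ k ≤ x} := ⟨hmax.1.1.trans hmx, hkx⟩
    have : x = m := le_antisymm (hmax.2 hxs hmx) hmx
    exact hmS (this ▸ hx)
  exact hmax.1.2 (hS ▸ hkS)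

/-- Join density of completely join-irreducible elements. -/
lemma exists_cji (c : A → A) (hinv : ∀ x, c (c x) = x)
    (hanti : ∀ x y : A, x ≤ y ↔ c y ≤ c x) {a b : A} (hab : ¬ a ≤ b) :
    ∃ j : A, CompletelyJoinIrreducible j ∧ j ≤ a ∧ ¬ j ≤ b := by
  have hcb : ¬ c b ≤ c a := fun h => hab (by rw [hanti]; exact h)
  obtain ⟨m, hcmi, hcam, hcbm⟩ := exists_cmi hcb
  refine ⟨c m, ?_, ?_, ?_⟩
  · intro S hS
    have hm : m = sInf (c '' S) := by
      rw [← hinv m, hS, csSup c hinv hanti]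
    obtain ⟨s, hsS, hsm⟩ := hcmi (c '' S) hm
    have : c m = s := by rw [← hsm, hinv]
    exact this ▸ hsS
  · rw [hanti, hinv]; exact hcam
  · intro h; exact hcbm (by rw [← hinv b, ← hanti] at h; exact h)

/-- The key primeness property of `star`: `j* ≰ c j`. -/
lemma star_not_le (hdist : ∀ x y z : A, x ⊓ (y ⊔ z) = (x ⊓ y) ⊔ (x ⊓ z))
    (c : A → A) (hinv : ∀ x, c (c x) = x)
    (hanti : ∀ x y : A, x ≤ y ↔ c y ≤ c x)
    {j : A} (hj : CompletelyJoinIrreducible j) : ¬ star c j ≤ c j := by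
  intro h
  have hj' : j ≤ c (star c j) := by
    have := (hanti _ _).1 h
    rwa [hinv] at this
  have hj'' : j ≤ sSup (c '' {x : A | ¬ x ≤ c j}) := by
    rw [← csInf c hinv hanti]
    exact hj'
  obtain ⟨_, ⟨s, hs, rfl⟩, hjs⟩ := joinPrime hdist hj hj''
  exact hs ((le_c_iff c hinv hanti s j).mpr hjs)

lemma star_cji (hdist : ∀ x y z : A, x ⊓ (y ⊔ z) = (x ⊓ y) ⊔ (x ⊓ z))
    (c : A → A) (hinv : ∀ x, c (c x) = x)
    (hanti : ∀ x y : A, x ≤ y ↔ c y ≤ c x)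
    {j : A} (hj : CompletelyJoinIrreducible j) :
    CompletelyJoinIrreducible (star c j) := by
  intro S hS
  by_contra hmem
  apply star_not_le hdist c hinv hanti hj
  rw [hS]
  apply sSup_le
  intro s hs
  by_contra hsc
  have h1 : star c j ≤ s := sInf_le hsc
  have h2 : s ≤ star c j := hS ▸ le_sSup hs
  exact hmem (le_antisymm h2 h1 ▸ hs)

lemma star_star (hdist : ∀ x y z : A, x ⊓ (y ⊔ z) = (x ⊓ y) ⊔ (x ⊓ z))
    (c : A → A) (hinv : ∀ x, c (c x) = x)
    (hanti : ∀ x y : A, x ≤ y ↔ c y ≤ c x)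
    {j : A} (hj : CompletelyJoinIrreducible j) : star c (star c j) = j := by
  apply le_antisymm
  · apply sInf_le
    intro hle
    exact star_not_le hdist c hinv hanti hj ((le_c_iff c hinv hanti j (star c j)).mp hle)
  · apply le_sInf
    intro x hx
    by_contra hjx
    apply hx
    rw [le_c_iff c hinv hanti]
    apply sInf_le
    intro hcx
    exact hjx ((hanti j x).mpr hcx)

lemma le_star_of_le_c (hdist : ∀ x y z : A, x ⊓ (y ⊔ z) = (x ⊓ y) ⊔ (x ⊓ z))
    (c : A → A) (hinv : ∀ x, c (c x) = x)
    (hanti : ∀ x y : A, x ≤ y ↔ c y ≤ c x)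
    (hkl : ∀ x y : A, x ⊓ c x ≤ y ⊔ c y)
    {j : A} (hj : CompletelyJoinIrreducible j) (hjc : j ≤ c j) : j ≤ star c j := by
  apply le_sInf
  intro x hx
  have hjxx : j ≤ x ⊔ c x := by
    calc j = j ⊓ c j := (inf_eq_left.mpr hjc).symm
    _ ≤ x ⊔ c x := hkl j x
  rcases joinPrime2 hdist hj hjxx with h | h
  · exact h
  · exact absurd ((le_c_iff c hinv hanti x j).mpr h) hx

/-- `ρ(j*) = ρ(j)` when `j ≤ j*`. -/
lemma rho_star (hdist : ∀ x y z : A, x ⊓ (y ⊔ z) = (x ⊓ y) ⊔ (x ⊓ z))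
    (c : A → A) (hinv : ∀ x, c (c x) = x)
    (hanti : ∀ x y : A, x ≤ y ↔ c y ≤ c x)
    {j : A} (hj : CompletelyJoinIrreducible j) (h1 : j ≤ star c j) :
    rho c (star c j) = rho c j := by
  have hss := star_star hdist c hinv hanti hj
  unfold rho
  rw [hss, if_pos h1]
  by_cases h2 : star c j ≤ j
  · rw [if_pos h2]; exact le_antisymm h2 h1
  · rw [if_neg h2]

end NAux

/-- In the construction `x R y ↔ ρ(x) ≤ ρ(y)` on the completely join-irreducible
elements of a Nelson algebra on an algebraic lattice: `R` is a partial order iff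
`R` is the identity relation on `J`, iff `A` is a Boolean algebra. -/
theorem nelson_partial_order_iff_boolean {A : Type*}
    [CompleteLattice A] [IsCompactlyGenerated A]
    (hdist : ∀ x y z : A, x ⊓ (y ⊔ z) = (x ⊓ y) ⊔ (x ⊓ z))
    (c : A → A) (hinv : ∀ x, c (c x) = x)
    (hanti : ∀ x y : A, x ≤ y ↔ c y ≤ c x)
    (hkl : ∀ x y : A, x ⊓ c x ≤ y ⊔ c y)
    (arrow : A → A → A)
    (hN1 : ∀ a, arrow a a = ⊤)
    (hN2 : ∀ a b, (c a ⊔ b) ⊓ arrow a b = c a ⊔ b)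
    (hN3 : ∀ a b, a ⊓ arrow a b = a ⊓ (c a ⊔ b))
    (hN4 : ∀ a b d, arrow a (b ⊓ d) = arrow a b ⊓ arrow a d)
    (hN5 : ∀ a b d, arrow (a ⊓ b) d = arrow a (arrow b d)) :
    ((∀ x y : A, CompletelyJoinIrreducible x → CompletelyJoinIrreducible y →
        rho c x ≤ rho c y → rho c y ≤ rho c x → x = y) ↔
      (∀ x y : A, CompletelyJoinIrreducible x → CompletelyJoinIrreducible y →
        (rho c x ≤ rho c y ↔ x = y))) ∧
    ((∀ x y : A, CompletelyJoinIrreducible x → CompletelyJoinIrreducible y →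
        (rho c x ≤ rho c y ↔ x = y)) ↔
      (∀ a : A, ∃ b : A, a ⊔ b = ⊤ ∧ a ⊓ b = ⊥)) := by
  -- complements from `a ⊓ c a = ⊥`
  have hmk : ∀ a : A, a ⊓ c a = ⊥ → a ⊔ c a = ⊤ := by
    intro a hbot
    have h : c (a ⊔ c a) = ⊥ := by
      rw [NAux.csup2 c hinv hanti, hinv, inf_comm (c a) a]
      exact hbot
    rw [← hinv (a ⊔ c a), h, NAux.cbot c hinv hanti]
  -- antisymmetry implies Boolean
  have h1 : (∀ x y : A, CompletelyJoinIrreducible x → CompletelyJoinIrreducible y →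
      rho c x ≤ rho c y → rho c y ≤ rho c x → x = y) →
      (∀ a : A, ∃ b : A, a ⊔ b = ⊤ ∧ a ⊓ b = ⊥) := by
    intro hanti_rel a
    have hbot : a ⊓ c a = ⊥ := by
      by_contra hne
      have hnle : ¬ a ⊓ c a ≤ ⊥ := fun h => hne (le_bot_iff.mp h)
      obtain ⟨j, hj, hja, hjb⟩ := NAux.exists_cji c hinv hanti hnle
      have hjc : j ≤ c j :=
        (hja.trans inf_le_right).trans (NAux.cmono c hinv hanti (hja.trans inf_le_left))
      have hjstar : j ≤ star c j := NAux.le_star_of_le_c hdist c hinv hanti hkl hj hjc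
      have hsj : CompletelyJoinIrreducible (star c j) :=
        NAux.star_cji hdist c hinv hanti hj
      have hrho : rho c (star c j) = rho c j :=
        NAux.rho_star hdist c hinv hanti hj hjstar
      have heq : j = star c j := hanti_rel j (star c j) hj hsj (hrho ▸ le_rfl) (hrho ▸ le_rfl)
      exact NAux.star_not_le hdist c hinv hanti hj (heq ▸ hjc)
    exact ⟨c a, hmk a hbot, hbot⟩
  -- Boolean implies identity
  have h2 : (∀ a : A, ∃ b : A, a ⊔ b = ⊤ ∧ a ⊓ b = ⊥) →
      (∀ x y : A, CompletelyJoinIrreducible x → CompletelyJoinIrreducible y →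
        (rho c x ≤ rho c y ↔ x = y)) := by
    intro hbool
    have hcompl : ∀ a : A, a ⊓ c a = ⊥ := by
      intro a
      set e := a ⊓ c a with he
      have hce : c e = c a ⊔ a := by
        rw [he, NAux.cinf2 c hinv hanti, hinv]
      have hece : e ≤ c e := by
        rw [hce]
        exact le_sup_of_le_right inf_le_left
      obtain ⟨e', he'top, he'bot⟩ := hbool e
      have h1' : e ≤ e' ⊔ c e' := by
        calc e = e ⊓ c e := (inf_eq_left.mpr hece).symm
        _ ≤ e' ⊔ c e' := hkl e e'
      have h2' : e ≤ c e' := by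
        have hsplit : e = (e ⊓ e') ⊔ (e ⊓ c e') := by
          rw [← hdist]; exact (inf_eq_left.mpr h1').symm
        rw [he'bot, bot_sup_eq] at hsplit
        exact hsplit.le.trans inf_le_right
      have : e ≤ c e ⊓ c e' := le_inf hece h2'
      rw [← NAux.csup2 c hinv hanti, he'top, NAux.ctop c hinv hanti] at this
      exact le_bot_iff.mp this
    have htop : ∀ a : A, a ⊔ c a = ⊤ := fun a => hmk a (hcompl a)
    -- every CJI j satisfies rho j = j
    have hrho_id : ∀ j : A, CompletelyJoinIrreducible j → rho c j = j := by
      intro j hj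
      have hle : j ≤ star c j := by
        apply le_sInf
        intro x hx
        have hjx : j ≤ x ⊔ c x := (htop x) ▸ le_top
        rcases NAux.joinPrime2 hdist hj hjx with h | h
        · exact h
        · exact absurd ((NAux.le_c_iff c hinv hanti x j).mpr h) hx
      unfold rho
      rw [if_pos hle]
    intro x y hx hy
    rw [hrho_id x hx, hrho_id y hy]
    constructor
    · intro hxy
      by_contra hne
      have hysup : y = sSup {x, y ⊓ c x} := by
        rw [sSup_pair]
        have hy' : y = (y ⊓ x) ⊔ (y ⊓ c x) := by
          rw [← hdist, htop x, inf_top_eq]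
        rwa [inf_eq_right.mpr hxy] at hy'
      have hmem := hy {x, y ⊓ c x} hysup
      simp only [Set.mem_insert_iff, Set.mem_singleton_iff] at hmem
      rcases hmem with h | h
      · exact hne h.symm
      · have hycx : y ≤ c x := h.le.trans inf_le_right
        have : x ≤ ⊥ := (hcompl x) ▸ le_inf le_rfl (hxy.trans hycx)
        exact NAux.cji_ne_bot hx (le_bot_iff.mp this)
    · rintro rfl; exact le_rfl
  -- identity implies antisymmetry
  have h3 : (∀ x y : A, CompletelyJoinIrreducible x → CompletelyJoinIrreducible y →
      (rho c x ≤ rho c y ↔ x = y)) →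
      (∀ x y : A, CompletelyJoinIrreducible x → CompletelyJoinIrreducible y →
        rho c x ≤ rho c y → rho c y ≤ rho c x → x = y) := by
    intro hid x y hx hy hxy _
    exact (hid x y hx hy).1 hxy
  exact ⟨⟨fun ha => h2 (h1 ha), h3⟩, ⟨fun hid => h1 (h3 hid), h2⟩⟩
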